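/- Let α, β > 0 (gamma parameters). Set ē := β·(1 - (1+X)^{-1/α}) ∈ ℝ⟦X⟧. Then for all natural numbers n ≥ k: c_n( ē^k / k! ) = (β^k/k!)·(-1/α)^n·Σ_{j=0}^{k} binom(k,j)·(-1)^j·(j+(n-1)α)_{n,α}, where (x)_{n,α} := ∏_{i=0}^{n-1}(x - iα) is the degenerate falling factorial with (x)_{0,α} := 1. -/

import Mathlib

open PowerSeries Finset

noncomputable section

/-- `cN n F = n! * (coefficient of X^n in F)`. -/
def cN (n : ℕ) (F : PowerSeries ℝ) : ℝ := (n.factorial : ℝ) * PowerSeries.coeff (R := ℝ) n F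

/-- Formal substitution `F ∘ G` (faithful when `G` has zero constant coefficient). -/
def pcomp (F G : PowerSeries ℝ) : PowerSeries ℝ :=
  PowerSeries.mk fun n =>
    ∑ k ∈ Finset.range (n + 1), (PowerSeries.coeff (R := ℝ) k F) * (PowerSeries.coeff (R := ℝ) n (G ^ k))

/-- The formal series of log(1+X). -/
def L : PowerSeries ℝ := PowerSeries.mk fun n => if n = 0 then 0 else (-1 : ℝ) ^ (n - 1) / n

/-- Falling factorial `(y)_m`. -/
def ff (y : ℝ) (m : ℕ) : ℝ := ∏ i ∈ Finset.range m, (y - i)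

/-- Rising factorial `⟨y⟩_m`. -/
def rf (y : ℝ) (m : ℕ) : ℝ := ∏ i ∈ Finset.range m, (y + i)

/-- Degenerate falling factorial `(x)_{n,λ}`. -/
def ffl (x : ℝ) (n : ℕ) (lam : ℝ) : ℝ := ∏ i ∈ Finset.range n, (x - i * lam)

/-- Stirling numbers of the second kind. -/
def S2 (n k : ℕ) : ℝ :=
  (k.factorial : ℝ)⁻¹ * ∑ j ∈ Finset.range (k + 1), (-1 : ℝ) ^ (k - j) * (k.choose j) * (j : ℝ) ^ n

/-- The falling factorial polynomial `x(x-1)⋯(x-n+1)`. -/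
def fallingPoly (n : ℕ) : Polynomial ℝ := ∏ i ∈ Finset.range n, (Polynomial.X - Polynomial.C (i : ℝ))

/-- (Signed) Stirling numbers of the first kind. -/
def S1 (n k : ℕ) : ℝ := (fallingPoly n).coeff k

/-- Degenerate Stirling numbers of the second kind. -/
def S2d (lam : ℝ) (n k : ℕ) : ℝ :=
  (k.factorial : ℝ)⁻¹ *
    ∑ j ∈ Finset.range (k + 1), (-1 : ℝ) ^ (k - j) * (k.choose j) * ffl (j : ℝ) n lam

/-- Formal degenerate exponential `e_λ`. -/
def degExp (lam : ℝ) : PowerSeries ℝ := PowerSeries.mk fun n => ffl 1 n lam / n.factorial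

/-- Formal degenerate logarithm `Λ_λ` of `1+X`. -/
def degLog (lam : ℝ) : PowerSeries ℝ :=
  lam⁻¹ • PowerSeries.mk fun n => if n = 0 then 0 else ff lam n / n.factorial

/-- Degenerate Stirling numbers of the first kind. -/
def S1d (lam : ℝ) (n k : ℕ) : ℝ := cN n ((k.factorial : ℝ)⁻¹ • (degLog lam) ^ k)

/-- Binomial series `(1+X)^c`. -/
def binser (c : ℝ) : PowerSeries ℝ := PowerSeries.mk fun n => ff c n / n.factorial

/-- Frobenius–Euler numbers of order `j`. -/
def FE (u : ℝ) (j n : ℕ) : ℝ :=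
  cN n (((1 - u) • (PowerSeries.exp ℝ - PowerSeries.C (R := ℝ) u)⁻¹) ^ j)


lemma ff_eq_smeval (y : ℝ) (m : ℕ) : ff y m = (descPochhammer ℤ m).smeval y := by
  induction m with
  | zero => simp [ff]
  | succ m ih =>
    rw [ff, Finset.prod_range_succ, ← ff, ih, descPochhammer_succ_right,
      Polynomial.smeval_mul, Polynomial.smeval_sub, Polynomial.smeval_X,
      Polynomial.smeval_natCast]
    simp

lemma ff_add (c d : ℝ) (m : ℕ) :
    ff (c + d) m = ∑ ij ∈ Finset.HasAntidiagonal.antidiagonal m, (m.choose ij.1 : ℝ) * (ff c ij.1 * ff d ij.2) := by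
  simp only [ff_eq_smeval]
  have := Ring.descPochhammer_smeval_add (R := ℝ) (r := c) (s := d) m (mul_comm c d)
  simpa using this

lemma binser_mul (c d : ℝ) : binser c * binser d = binser (c + d) := by
  ext m
  rw [PowerSeries.coeff_mul]
  simp only [binser, PowerSeries.coeff_mk, ff_add, Finset.sum_mul, Finset.mul_sum]
  rw [Finset.sum_div, Finset.sum_congr rfl]
  intro ij hij
  obtain ⟨i, j⟩ := ij
  have hij' : i + j = m := Finset.HasAntidiagonal.mem_antidiagonal.mp hij
  have hfac : (m.choose i : ℝ) = (m.factorial : ℝ) / (i.factorial * j.factorial) := by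
    subst hij'
    rw [Nat.cast_choose ℝ (Nat.le_add_right i j), Nat.add_sub_cancel_left]
  have h1 : (i.factorial : ℝ) ≠ 0 := by positivity
  have h2 : (j.factorial : ℝ) ≠ 0 := by positivity
  have h3 : (m.factorial : ℝ) ≠ 0 := by positivity
  field_simp [hfac]
  rw [hfac]; field_simp

lemma binser_zero : binser 0 = 1 := by
  ext m
  cases m with
  | zero => simp [binser, ff]
  | succ m =>
    rw [binser, PowerSeries.coeff_mk]
    simp only [ff, Finset.prod_range_succ']
    simp [PowerSeries.coeff_one]

lemma binser_pow (c : ℝ) (j : ℕ) : binser c ^ j = binser (j * c) := by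
  induction j with
  | zero => simp [binser_zero]
  | succ j ih =>
    rw [pow_succ, ih, binser_mul]
    push_cast; ring_nf

lemma ffl_eq (α : ℝ) (hα : α ≠ 0) (n j : ℕ) :
    (-α⁻¹) ^ n * ffl ((j : ℝ) + ((n : ℝ) - 1) * α) n α = ff (-(j : ℝ) * α⁻¹) n := by
  have h1 : ffl ((j : ℝ) + ((n : ℝ) - 1) * α) n α = ∏ i ∈ Finset.range n, ((j : ℝ) + i * α) := by
    rw [ffl, ← Finset.prod_range_reflect]
    refine Finset.prod_congr rfl fun i hi => ?_
    have hi' : i < n := Finset.mem_range.mp hi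
    have : ((n - 1 - i : ℕ) : ℝ) = (n : ℝ) - 1 - i := by
      have : i ≤ n - 1 := Nat.le_sub_one_of_lt hi'
      push_cast [Nat.cast_sub this, Nat.cast_sub (Nat.one_le_of_lt (Nat.lt_of_le_of_lt (Nat.zero_le i) hi'))]
      ring
    rw [this]; ring
  rw [h1, ff, Finset.pow_eq_prod_const, ← Finset.prod_mul_distrib]
  refine Finset.prod_congr rfl fun i _ => ?_
  field_simp
  ring

theorem stmt13 (α β : ℝ) (hα : 0 < α) (hβ : 0 < β) (n k : ℕ) (hkn : k ≤ n) :
    cN n ((k.factorial : ℝ)⁻¹ • (β • (1 - binser (-α⁻¹))) ^ k)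
      = β ^ k / (k.factorial : ℝ) * (-α⁻¹) ^ n *
          ∑ j ∈ Finset.range (k + 1),
            (k.choose j : ℝ) * (-1) ^ j * ffl ((j : ℝ) + ((n : ℝ) - 1) * α) n α := by
  classical
  have hα' : α ≠ 0 := ne_of_gt hα
  have hexp : (1 - binser (-α⁻¹)) ^ k
      = ∑ j ∈ Finset.range (k + 1), (k.choose j : ℝ) • ((-1 : PowerSeries ℝ) ^ j * binser (j * (-α⁻¹))) := by
    rw [sub_eq_add_neg, add_comm, add_pow]
    refine Finset.sum_congr rfl fun j hj => ?_
    rw [← binser_pow, neg_pow]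
    simp [mul_comm, mul_assoc, nsmul_eq_mul, Algebra.smul_def]
  rw [smul_pow, hexp]
  have hneg : ∀ j : ℕ, ((-1 : PowerSeries ℝ) ^ j) = PowerSeries.C (R := ℝ) ((-1 : ℝ) ^ j) := by
    intro j; rw [map_pow, map_neg, map_one]
  simp only [smul_pow, smul_smul, cN, map_smul, Finset.smul_sum, map_sum, hneg,
    PowerSeries.coeff_C_mul, smul_eq_mul, binser, PowerSeries.coeff_mk]
  rw [Finset.mul_sum, Finset.mul_sum, Finset.sum_congr rfl]
  intro j hj
  rw [show ((j : ℝ)) * -α⁻¹ = -(j : ℝ) * α⁻¹ from by ring, ← ffl_eq α hα' n j]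
  have h3 : (n.factorial : ℝ) ≠ 0 := by positivity
  have h4 : (k.factorial : ℝ) ≠ 0 := by positivity
  field_simp
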